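/- Let G be a graph with at least one edge and p > 1. Then for every vertex i, the standard basis vector e_i does not maximize F_G(x) = ∑_{jk∈E}(x_j - x_k)^2 over the p-norm unit sphere; that is, F_G(e_i) < μ^{(p)}(G), provided vertex i is not isolated. -/

import Mathlib

open scoped Classical
open Finset

/-- The `p`-norm of a vector. -/
noncomputable def pNorm {V : Type*} [Fintype V] (p : ℝ) (x : V → ℝ) : ℝ :=
  (∑ i, |x i| ^ p) ^ (1 / p)

/-- The sup-norm of a vector. -/
noncomputable def supNorm {V : Type*} [Fintype V] (x : V → ℝ) : ℝ :=
  ⨆ i, |x i|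

/-- The Laplacian quadratic form `∑_{ij ∈ E} (x_i - x_j)^2` of a graph. -/
noncomputable def quadForm {V : Type*} [Fintype V] (G : SimpleGraph V) (x : V → ℝ) : ℝ :=
  (∑ i, ∑ j, if G.Adj i j then (x i - x j) ^ 2 else 0) / 2

/-- The `p`-spectral radius of the Laplacian: `μ⁽ᵖ⁾(G) = max_{‖x‖ₚ = 1} xᵀLx`. -/
noncomputable def mu {V : Type*} [Fintype V] (G : SimpleGraph V) (p : ℝ) : ℝ :=
  sSup {y | ∃ x : V → ℝ, pNorm p x = 1 ∧ quadForm G x = y}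

/-- `μ⁽^∞⁾(G) = max_{‖x‖_∞ = 1} xᵀLx`. -/
noncomputable def muInf {V : Type*} [Fintype V] (G : SimpleGraph V) : ℝ :=
  sSup {y | ∃ x : V → ℝ, supNorm x = 1 ∧ quadForm G x = y}

-- row lower bound
lemma row_le_quad {n : ℕ} (G : SimpleGraph (Fin n)) (i : Fin n) (x : Fin n → ℝ) :
    (∑ b, if G.Adj i b then (x i - x b) ^ 2 else 0) ≤ quadForm G x := by
  set f : Fin n → Fin n → ℝ := fun a b => if G.Adj a b then (x a - x b) ^ 2 else 0 with hf
  have hf0 : ∀ a b, 0 ≤ f a b := by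
    intro a b; simp only [hf]; split_ifs <;> positivity
  have hfii : f i i = 0 := by simp [hf]
  have hsym : ∀ a b, f a b = f b a := by
    intro a b; simp only [hf, G.adj_comm a b]
    split_ifs <;> ring_nf
  have key : ∀ a b, (if a = i then f a b else 0) + (if b = i then f a b else 0) ≤ f a b := by
    intro a b
    by_cases ha : a = i <;> by_cases hb : b = i <;> simp [ha, hb, hfii, hf0]
  have h1 : ∑ a, ∑ b, ((if a = i then f a b else 0) + (if b = i then f a b else 0))
      ≤ ∑ a, ∑ b, f a b := by
    apply Finset.sum_le_sum; intro a _; apply Finset.sum_le_sum; intro b _; exact key a b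
  have h2 : ∑ a, ∑ b, ((if a = i then f a b else 0) + (if b = i then f a b else 0))
      = 2 * ∑ b, f i b := by
    rw [Finset.sum_congr rfl (fun a _ => Finset.sum_add_distrib), Finset.sum_add_distrib]
    have e1 : ∑ a, ∑ b, (if a = i then f a b else 0) = ∑ b, f i b := by
      have h' : ∀ a, (∑ b, if a = i then f a b else 0) = if a = i then ∑ b, f i b else 0 := by
        intro a; split_ifs with h
        · subst h; rfl
        · simp
      rw [Finset.sum_congr rfl (fun a _ => h' a),
        Finset.sum_ite_eq' Finset.univ i (fun _ => ∑ b, f i b), if_pos (Finset.mem_univ i)]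
    have e2 : ∑ a, ∑ b, (if b = i then f a b else 0) = ∑ b, f i b := by
      have h' : ∀ a, ∑ b, (if b = i then f a b else 0) = f a i := by
        intro a; rw [Finset.sum_ite_eq' Finset.univ i (fun b => f a b)]; simp
      rw [Finset.sum_congr rfl (fun a _ => h' a)]
      exact Finset.sum_congr rfl (fun a _ => hsym a i)
    rw [e1, e2]; ring
  have : 2 * ∑ b, f i b ≤ ∑ a, ∑ b, f a b := h2 ▸ h1
  unfold quadForm
  linarith

lemma quad_basis {n : ℕ} (G : SimpleGraph (Fin n)) (i : Fin n) :
    quadForm G (fun k => if k = i then (1 : ℝ) else 0) =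
      ∑ b, if G.Adj i b then (1 : ℝ) else 0 := by
  set x : Fin n → ℝ := fun k => if k = i then (1 : ℝ) else 0 with hx
  set f : Fin n → Fin n → ℝ := fun a b => if G.Adj a b then (x a - x b) ^ 2 else 0 with hf
  have hfii : f i i = 0 := by simp [hf]
  have hsym : ∀ a b, f a b = f b a := by
    intro a b; simp only [hf, G.adj_comm a b]
    split_ifs <;> ring_nf
  have key : ∀ a b, f a b = (if a = i then f a b else 0) + (if b = i then f a b else 0) := by
    intro a b
    by_cases ha : a = i <;> by_cases hb : b = i <;>
      simp [ha, hb, hfii, hf, hx]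
  have h2 : ∑ a, ∑ b, f a b = 2 * ∑ b, f i b := by
    rw [Finset.sum_congr rfl (fun a _ => Finset.sum_congr rfl (fun b _ => key a b))]
    rw [Finset.sum_congr rfl (fun a _ => Finset.sum_add_distrib), Finset.sum_add_distrib]
    have e1 : ∑ a, ∑ b, (if a = i then f a b else 0) = ∑ b, f i b := by
      have h' : ∀ a, (∑ b, if a = i then f a b else 0) = if a = i then ∑ b, f i b else 0 := by
        intro a; split_ifs with h
        · subst h; rfl
        · simp
      rw [Finset.sum_congr rfl (fun a _ => h' a),
        Finset.sum_ite_eq' Finset.univ i (fun _ => ∑ b, f i b), if_pos (Finset.mem_univ i)]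
    have e2 : ∑ a, ∑ b, (if b = i then f a b else 0) = ∑ b, f i b := by
      have h' : ∀ a, ∑ b, (if b = i then f a b else 0) = f a i := by
        intro a; rw [Finset.sum_ite_eq' Finset.univ i (fun b => f a b)]; simp
      rw [Finset.sum_congr rfl (fun a _ => h' a)]
      exact Finset.sum_congr rfl (fun a _ => hsym a i)
    rw [e1, e2]; ring
  have hrow : ∑ b, f i b = ∑ b, if G.Adj i b then (1 : ℝ) else 0 := by
    apply Finset.sum_congr rfl
    intro b _
    simp only [hf, hx]
    split_ifs with h hb
    · exact absurd hb.symm h.ne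
    · norm_num
    · rfl
  unfold quadForm
  show (∑ a, ∑ b, f a b) / 2 = _
  rw [h2, hrow]; ring

lemma mu_bdd {n : ℕ} (G : SimpleGraph (Fin n)) (p : ℝ) (hp : 1 < p) :
    BddAbove {y | ∃ x : Fin n → ℝ, pNorm p x = 1 ∧ quadForm G x = y} := by
  refine ⟨2 * n ^ 2, ?_⟩
  rintro y ⟨x, hx, rfl⟩
  have hp0 : (0:ℝ) < p := by linarith
  have hS : ∑ k, |x k| ^ p = 1 := by
    have h0 : (0:ℝ) ≤ ∑ k, |x k| ^ p := by
      apply Finset.sum_nonneg; intro k _; positivity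
    have := congrArg (fun z : ℝ => z ^ p) hx
    simpa [pNorm, ← Real.rpow_natCast, ← Real.rpow_mul h0,
      one_div_mul_cancel hp0.ne', inv_mul_cancel₀ hp0.ne', Real.one_rpow] using this
  have hxb : ∀ k, |x k| ≤ 1 := by
    intro k
    by_contra h
    push_neg at h
    have h1 : (1:ℝ) < |x k| ^ p := Real.one_lt_rpow_iff_of_pos (by positivity) |>.mpr
      (Or.inl ⟨h, hp0⟩)
    have h2 : |x k| ^ p ≤ ∑ k, |x k| ^ p :=
      Finset.single_le_sum (f := fun k => |x k| ^ p) (fun k _ => by positivity) (Finset.mem_univ k)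
    rw [hS] at h2; linarith
  have hterm : ∀ a b, (if G.Adj a b then (x a - x b) ^ 2 else 0) ≤ 4 := by
    intro a b
    split_ifs
    · have ha := hxb a; have hb := hxb b
      have := abs_le.mp ha; have := abs_le.mp hb
      nlinarith [abs_le.mp (hxb a), abs_le.mp (hxb b)]
    · norm_num
  unfold quadForm
  have : ∑ a, ∑ b, (if G.Adj a b then (x a - x b) ^ 2 else 0) ≤ ∑ a : Fin n, ∑ b : Fin n, (4:ℝ) := by
    apply Finset.sum_le_sum; intro a _; apply Finset.sum_le_sum; intro b _; exact hterm a b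
  simp only [Finset.sum_const, Finset.card_univ, Fintype.card_fin, nsmul_eq_mul] at this
  have : ∑ a, ∑ b, (if G.Adj a b then (x a - x b) ^ 2 else 0) ≤ 4 * n ^ 2 := by
    calc _ ≤ (n : ℝ) * ((n:ℝ) * 4) := this
    _ = 4 * n ^ 2 := by ring
  linarith


theorem basis_vector_not_maximizer {n : ℕ} (G : SimpleGraph (Fin n)) (p : ℝ) (hp : 1 < p)
    (i : Fin n) (hi : ∃ j, G.Adj i j) :
    quadForm G (fun k => if k = i then (1 : ℝ) else 0) < mu G p := by
  obtain ⟨j₀, hj⟩ := hi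
  have hji : j₀ ≠ i := hj.ne'
  have hp0 : (0:ℝ) < p := by linarith
  set d : ℝ := ∑ b, if G.Adj i b then (1:ℝ) else 0 with hd
  have hd1 : (1:ℝ) ≤ d := by
    have : (if G.Adj i j₀ then (1:ℝ) else 0) ≤ d :=
      Finset.single_le_sum (f := fun b => if G.Adj i b then (1:ℝ) else 0)
        (fun b _ => by split_ifs <;> norm_num) (Finset.mem_univ j₀)
    rwa [if_pos hj] at this
  -- choose s
  set s : ℝ := min (1/2) ((1/(2*d+2)) ^ ((1:ℝ)/(p-1))) with hs
  have hA0 : (0:ℝ) < 1/(2*d+2) := by positivity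
  have hs0 : 0 < s := lt_min (by norm_num) (Real.rpow_pos_of_pos hA0 _)
  have hs_half : s ≤ 1/2 := min_le_left _ _
  have hs1 : s < 1 := lt_of_le_of_lt hs_half (by norm_num)
  have hsp_le : s ^ p ≤ s := by
    have := Real.rpow_le_rpow_of_exponent_ge hs0 hs1.le (by linarith : (1:ℝ) ≤ p)
    rwa [Real.rpow_one] at this
  have hsp_pos : 0 < s ^ p := Real.rpow_pos_of_pos hs0 _
  have hspm : s ^ (p-1) ≤ 1/(2*d+2) := by
    have h1 : s ^ (p-1) ≤ ((1/(2*d+2)) ^ ((1:ℝ)/(p-1))) ^ (p-1) :=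
      Real.rpow_le_rpow hs0.le (min_le_right _ _) (by linarith)
    rwa [← Real.rpow_mul hA0.le, one_div_mul_cancel (by linarith : p - 1 ≠ 0),
      Real.rpow_one] at h1
  have hsp_half : s ^ p ≤ 1/2 := le_trans hsp_le hs_half
  set t : ℝ := (1 - s ^ p) ^ ((1:ℝ)/p) with ht
  have hu0 : (0:ℝ) < 1 - s ^ p := by linarith
  have ht0 : 0 < t := Real.rpow_pos_of_pos hu0 _
  have ht1 : t ≤ 1 := Real.rpow_le_one hu0.le (by linarith) (by positivity)
  have htu : 1 - s ^ p ≤ t := by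
    have := Real.rpow_le_rpow_of_exponent_ge hu0 (by linarith : 1 - s ^ p ≤ 1)
      (by rw [div_le_one hp0]; linarith : (1:ℝ)/p ≤ 1)
    rwa [Real.rpow_one] at this
  have ht_half : 1/2 ≤ t := by linarith
  have htp : t ^ p = 1 - s ^ p := by
    rw [ht, ← Real.rpow_mul hu0.le, one_div_mul_cancel hp0.ne', Real.rpow_one]
  set y : Fin n → ℝ := fun k => if k = i then t else if k = j₀ then -s else 0 with hy
  have hpy : pNorm p y = 1 := by
    have hsum : ∑ k, |y k| ^ p = 1 := by
      have hpt : ∀ k, |y k| ^ p =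
          (if k = i then 1 - s ^ p else 0) + (if k = j₀ then s ^ p else 0) := by
        intro k
        simp only [hy]
        by_cases hk : k = i
        · simp [hk, hji.symm, abs_of_pos ht0, htp]
        · by_cases hk' : k = j₀
          · simp [hk, hk', hji, abs_of_pos hs0]
          · simp [hk, hk', Real.zero_rpow hp0.ne']
      rw [Finset.sum_congr rfl (fun k _ => hpt k), Finset.sum_add_distrib,
        Finset.sum_ite_eq' Finset.univ i (fun _ => 1 - s ^ p),
        Finset.sum_ite_eq' Finset.univ j₀ (fun _ => s ^ p),
        if_pos (Finset.mem_univ i), if_pos (Finset.mem_univ j₀)]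
      ring
    rw [pNorm, hsum, Real.one_rpow]
  have hrow : (∑ b, if G.Adj i b then (y i - y b) ^ 2 else 0) = d * t^2 + 2*t*s + s^2 := by
    have hpt : ∀ b, (if G.Adj i b then (y i - y b) ^ 2 else 0) =
        (if G.Adj i b then t^2 else 0) + (if b = j₀ then (t+s)^2 - t^2 else 0) := by
      intro b
      have hyi : y i = t := by simp [hy]
      by_cases hb : b = j₀
      · rw [hb]
        have hyb : y j₀ = -s := by simp [hy, hji]
        rw [if_pos hj, if_pos hj, if_pos rfl, hyi, hyb]
        ring
      · rw [if_neg hb]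
        by_cases hadj : G.Adj i b
        · have hyb : y b = 0 := by simp [hy, hadj.ne', hb]
          rw [if_pos hadj, if_pos hadj, hyi, hyb]
          ring
        · rw [if_neg hadj, if_neg hadj]; ring
    rw [Finset.sum_congr rfl (fun b _ => hpt b), Finset.sum_add_distrib,
      Finset.sum_ite_eq' Finset.univ j₀ (fun _ => (t+s)^2 - t^2), if_pos (Finset.mem_univ j₀)]
    have : (∑ b, if G.Adj i b then t^2 else 0) = d * t^2 := by
      rw [hd, Finset.sum_mul]
      apply Finset.sum_congr rfl
      intro b _
      split_ifs <;> ring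
    rw [this]; ring
  have hmain : d < d * t^2 + 2*t*s + s^2 := by
    have hsplit : s ^ p = s * s ^ (p-1) := by
      nth_rewrite 1 [show p = 1 + (p-1) by ring]
      rw [Real.rpow_add hs0, Real.rpow_one]
    have h2ts : s ≤ 2*t*s := by nlinarith
    have hdsp : 2 * d * s ^ p < s := by
      rw [hsplit]
      have : 2 * d * (s * s ^ (p-1)) ≤ 2 * d * (s * (1/(2*d+2))) := by
        apply mul_le_mul_of_nonneg_left _ (by linarith)
        exact mul_le_mul_of_nonneg_left hspm hs0.le
      have h3 : 2 * d * (s * (1/(2*d+2))) < s := by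
        rw [div_eq_mul_inv, one_mul]
        rw [show 2 * d * (s * (2*d+2)⁻¹) = s * ((2*d) * (2*d+2)⁻¹) by ring]
        have : (2*d) * (2*d+2)⁻¹ < 1 := by
          rw [mul_inv_lt_iff₀ (by linarith : (0:ℝ) < 2*d+2)]
          linarith
        nlinarith
      linarith
    have ht2 : 1 - 2 * s ^ p ≤ t ^ 2 := by nlinarith
    nlinarith
  have hq : quadForm G y ≤ mu G p := by
    apply le_csSup (mu_bdd G p hp)
    exact ⟨y, hpy, rfl⟩
  have hylow : d * t^2 + 2*t*s + s^2 ≤ quadForm G y := hrow ▸ row_le_quad G i y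
  rw [quad_basis G i]
  calc (∑ b, if G.Adj i b then (1:ℝ) else 0) = d := hd.symm
    _ < d * t^2 + 2*t*s + s^2 := hmain
    _ ≤ quadForm G y := hylow
    _ ≤ mu G p := hq
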